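/- Let n ≥ 1 and let B : ℝ → Matrix (Fin n) (Fin n) ℝ be differentiable with B(t) symmetric (B(t)ᵀ = B(t)) for every t, and suppose B′(t) + B(t)·B(t) = 0 for all t ∈ ℝ. Then B(t) = 0 for all t ∈ ℝ. -/

import Mathlib

attribute [local instance] Matrix.normedAddCommGroup Matrix.normedSpace

open Matrix

/-- A differentiable function on ℝ with `u' ≤ -u²/n` cannot be negative anywhere. -/
lemma riccati_scalar_neg (n : ℕ) (hn : 1 ≤ n) (u : ℝ → ℝ)
    (hu : Differentiable ℝ u)
    (h : ∀ t : ℝ, deriv u t ≤ -(u t) ^ 2 / n) (t0 : ℝ) (hneg : u t0 < 0) : False := by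
  have hnpos : (0:ℝ) < n := by exact_mod_cast Nat.lt_of_lt_of_le Nat.zero_lt_one hn
  have hanti : Antitone u := antitone_of_deriv_nonpos hu fun x => by
    have hx := h x
    rw [neg_div] at hx
    have : (0:ℝ) ≤ (u x)^2 / n := by positivity
    linarith
  have hub : ∀ x ∈ Set.Ici t0, u x < 0 := fun x hx => lt_of_le_of_lt (hanti hx) hneg
  set g : ℝ → ℝ := fun x => (u x)⁻¹ - x / n with hg
  have hmono : MonotoneOn g (Set.Ici t0) := by
    apply monotoneOn_of_deriv_nonneg (convex_Ici t0)
    · exact ((hu.continuous.continuousOn.inv₀ fun x hx => (hub x hx).ne).sub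
        (continuous_id.div_const _).continuousOn)
    · intro x hx
      rw [interior_Ici] at hx
      exact (((hu x).inv (hub x (Set.mem_Ici.mpr (le_of_lt (Set.mem_Ioi.mp hx)))).ne).sub
        ((differentiableAt_fun_id.div_const _))).differentiableWithinAt
    · intro x hx
      rw [interior_Ici] at hx
      have hux : u x < 0 := hub x (Set.mem_Ici.mpr (le_of_lt (Set.mem_Ioi.mp hx)))
      have hderiv : deriv g x = -deriv u x / (u x) ^ 2 - 1 / n := by
        rw [hg, deriv_fun_sub (f := fun y => (u y)⁻¹) (((hu x).inv hux.ne)) (differentiableAt_fun_id.div_const _),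
          deriv_fun_inv'' (hu x) hux.ne, deriv_div_const, deriv_id'']
      rw [hderiv]
      have hx2 : (0:ℝ) < (u x)^2 := by nlinarith
      have hd : deriv u x * n ≤ -(u x)^2 := by
        have := (le_div_iff₀ hnpos).1 (h x)
        linarith [this]
      rw [sub_nonneg, div_le_div_iff₀ hnpos hx2]
      nlinarith
  set v0 : ℝ := (u t0)⁻¹ with hv0
  have hv0neg : v0 < 0 := inv_neg''.mpr hneg
  set x : ℝ := t0 + n * (1 - v0) with hx
  have hxge : t0 ≤ x := by nlinarith
  have hle := hmono (Set.self_mem_Ici) hxge hxge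
  have hvx : (u x)⁻¹ < 0 := inv_neg''.mpr (hub x hxge)
  simp only [hg] at hle
  have hne : (n:ℝ) ≠ 0 := ne_of_gt hnpos
  have hxdiff : x / (n:ℝ) - t0 / n = 1 - v0 := by
    rw [hx]; field_simp; ring
  rw [← hv0] at hle
  linarith

lemma riccati_scalar (n : ℕ) (hn : 1 ≤ n) (u : ℝ → ℝ)
    (hu : Differentiable ℝ u)
    (h : ∀ t : ℝ, deriv u t ≤ -(u t) ^ 2 / n) : ∀ t : ℝ, u t = 0 := by
  intro t
  rcases lt_trichotomy (u t) 0 with hlt | heq | hgt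
  · exact absurd (riccati_scalar_neg n hn u hu h t hlt) id
  · exact heq
  · -- time reversal
    set w : ℝ → ℝ := fun s => -u (-s) with hw
    have hwdiff : Differentiable ℝ w := (hu.comp (differentiable_neg)).neg
    have hwderiv : ∀ s, deriv w s = deriv u (-s) := by
      intro s
      have h1 : HasDerivAt u (deriv u (-s)) (-s) := (hu (-s)).hasDerivAt
      have h2 : HasDerivAt (fun s : ℝ => -s) (-1) s := (hasDerivAt_id s).neg
      have h3 : HasDerivAt (fun s : ℝ => u (-s)) (deriv u (-s) * (-1)) s :=
        h1.comp s h2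
      have h4 : HasDerivAt w (-(deriv u (-s) * (-1))) s := h3.neg
      simpa using h4.deriv
    have hwric : ∀ s : ℝ, deriv w s ≤ -(w s) ^ 2 / n := by
      intro s
      rw [hwderiv]
      have := h (-s)
      simpa [hw] using this
    have hwneg : w (-t) < 0 := by simpa [hw] using hgt
    exact absurd (riccati_scalar_neg n hn w hwdiff hwric (-t) hwneg) id

theorem matrix_riccati_rigidity
    (n : ℕ) (hn : 1 ≤ n)
    (B : ℝ → Matrix (Fin n) (Fin n) ℝ)
    (hBdiff : Differentiable ℝ B)
    (hsymm : ∀ t : ℝ, (B t)ᵀ = B t)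
    (hriccati : ∀ t : ℝ, deriv B t + B t * B t = 0) :
    ∀ t : ℝ, B t = 0 := by
  have hderivB : ∀ t, deriv B t = -(B t * B t) := by
    intro t
    have := hriccati t
    linear_combination (norm := module) this
  set L : Matrix (Fin n) (Fin n) ℝ →L[ℝ] ℝ :=
    LinearMap.toContinuousLinearMap (Matrix.traceLinearMap (Fin n) ℝ ℝ) with hL
  set θ : ℝ → ℝ := fun t => (B t).trace with hθ
  have hθderiv : ∀ t, HasDerivAt θ ((deriv B t).trace) t := by
    intro t
    have h1 : HasDerivAt B (deriv B t) t := (hBdiff t).hasDerivAt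
    have h2 := L.hasFDerivAt.comp_hasDerivAt t h1
    exact h2
  have hθdiff : Differentiable ℝ θ := fun t => (hθderiv t).differentiableAt
  -- trace of square as sum of squares
  have htrsq : ∀ t, (B t * B t).trace = ∑ i, ∑ j, (B t i j) ^ 2 := by
    intro t
    have hs : ∀ i j, B t j i = B t i j := by
      intro i j
      have := congrFun (congrFun (hsymm t) i) j
      simpa [Matrix.transpose_apply] using this
    simp only [Matrix.trace, Matrix.diag, Matrix.mul_apply]
    refine Finset.sum_congr rfl fun i _ => Finset.sum_congr rfl fun j _ => ?_
    rw [hs i j, sq]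
  have hkey : ∀ t, deriv θ t ≤ -(θ t) ^ 2 / n := by
    intro t
    have hd : deriv θ t = -((B t * B t).trace) := by
      rw [(hθderiv t).deriv, hderivB t, Matrix.trace_neg]
    rw [hd, htrsq]
    -- need (θ t)^2 / n ≤ ∑ i, ∑ j, (B t i j)^2
    have h1 : (θ t) ^ 2 ≤ (n : ℝ) * ∑ i, (B t i i) ^ 2 := by
      have := sq_sum_le_card_mul_sum_sq (s := (Finset.univ : Finset (Fin n)))
        (f := fun i => B t i i)
      simpa [hθ, Matrix.trace, Matrix.diag] using this
    have h2 : ∑ i, (B t i i) ^ 2 ≤ ∑ i, ∑ j, (B t i j) ^ 2 := by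
      apply Finset.sum_le_sum
      intro i _
      exact Finset.single_le_sum (f := fun j => (B t i j)^2)
        (fun j _ => sq_nonneg _) (Finset.mem_univ i)
    have hnpos : (0:ℝ) < n := by exact_mod_cast Nat.lt_of_lt_of_le Nat.zero_lt_one hn
    have h3 : (θ t) ^ 2 / n ≤ ∑ i, ∑ j, (B t i j) ^ 2 := by
      rw [div_le_iff₀ hnpos]
      nlinarith
    rw [neg_div]
    linarith
  have hθ0 : ∀ t, θ t = 0 := riccati_scalar n hn θ hθdiff hkey
  intro t
  -- deriv θ = 0, hence trace of square is 0
  have hθfun : θ = fun _ => (0:ℝ) := funext hθ0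
  have hd0 : deriv θ t = 0 := by rw [hθfun]; simp
  have hd : deriv θ t = -((B t * B t).trace) := by
    rw [(hθderiv t).deriv, hderivB t, Matrix.trace_neg]
  have htr0 : ∑ i, ∑ j, (B t i j) ^ 2 = 0 := by
    rw [← htrsq]; linarith [hd0, hd ▸ hd0]
  have hzero : ∀ i ∈ (Finset.univ : Finset (Fin n)), ∑ j, (B t i j)^2 = 0 :=
    (Finset.sum_eq_zero_iff_of_nonneg fun i _ =>
      Finset.sum_nonneg fun j _ => sq_nonneg _).mp htr0
  ext i j
  have := (Finset.sum_eq_zero_iff_of_nonneg fun j _ => sq_nonneg (B t i j)).mp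
    (hzero i (Finset.mem_univ i)) j (Finset.mem_univ j)
  simpa using pow_eq_zero_iff (n := 2) (by norm_num) |>.mp this
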